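/- For every integer n \ge 2 and every real t with 0 < t < 1/2, the double inequality 2(2n+1)|B_{2n}| < |B_{2n+1}(t)| / (t(1/2 - t)(1 - t)) < 4(1 - 2^{1-2n})(2n+1)|B_{2n}| holds, where B_{2n} = B_{2n}(0) is the 2n-th Bernoulli number. -/

import Mathlib

open Set Real Filter

noncomputable def B (n : ℕ) (t : ℝ) : ℝ := Polynomial.aeval t (Polynomial.bernoulli n)

noncomputable def Bnum (n : ℕ) : ℝ := ((bernoulli n : ℚ) : ℝ)

lemma B_eq (m : ℕ) : B m = bernoulliFun m := by
  funext t
  rw [B, bernoulliFun, Polynomial.eval_map, Polynomial.aeval_def]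

lemma B_continuous (m : ℕ) : Continuous (B m) := by
  rw [B_eq]
  exact Polynomial.continuous _

lemma B_hasDerivAt (k : ℕ) (t : ℝ) :
    HasDerivAt (B (k+1)) (((k:ℝ)+1) * B k t) t := by
  rw [B_eq, B_eq]
  have := hasDerivAt_bernoulliFun (k+1) t
  simpa using this

lemma B_zero (m : ℕ) : B m 0 = Bnum m := by
  rw [B_eq, Bnum, bernoulliFun_eval_zero]

lemma Bnum_odd {m : ℕ} (h : Odd m) (h1 : 1 < m) : Bnum m = 0 := by
  rw [Bnum, bernoulli_eq_bernoulli'_of_ne_one (by omega), bernoulli'_eq_zero_of_odd h h1]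
  norm_num

lemma two_pow_big {j : ℕ} (hj : 2 ≤ j) : (2:ℝ) < 2 ^ j := by
  calc (2:ℝ) < 2^2 := by norm_num
    _ ≤ 2^j := pow_le_pow_right₀ one_le_two hj

lemma B_zero_eval (t : ℝ) : B 0 t = 1 := by
  simp [B, Polynomial.bernoulli]

lemma B_one_eval (t : ℝ) : B 1 t = t - 1/2 := by
  simp [B, Polynomial.bernoulli, Finset.sum_range_succ, bernoulli_one]
  ring

lemma B_two_eval (t : ℝ) : B 2 t = t^2 - t + 1/6 := by
  simp [B, Polynomial.bernoulli, Finset.sum_range_succ, bernoulli_one,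
    bernoulli_eq_bernoulli'_of_ne_one (by norm_num : (2:ℕ) ≠ 1), bernoulli'_two]
  ring

lemma B_three_eval (t : ℝ) : B 3 t = t^3 - 3/2*t^2 + 1/2*t := by
  simp [B, Polynomial.bernoulli, Finset.sum_range_succ, bernoulli_one,
    bernoulli_eq_bernoulli'_of_ne_one (by norm_num : (2:ℕ) ≠ 1), bernoulli'_two,
    bernoulli_eq_bernoulli'_of_ne_one (by norm_num : (3:ℕ) ≠ 1), bernoulli'_three]
  ring

noncomputable def Z (k : ℕ) : ℝ :=
  (-1 : ℝ) ^ (k + 1) * (2 : ℝ) ^ (2 * k - 1) * π ^ (2 * k) * Bnum (2 * k) / ((2 * k).factorial : ℝ)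

lemma Z_hasSum {k : ℕ} (hk : 1 ≤ k) :
    HasSum (fun n : ℕ => 1 / (n : ℝ) ^ (2 * k)) (Z k) := by
  have := hasSum_zeta_nat (k := k) (by omega)
  simpa [Z, Bnum] using this

lemma Z_ge_one {k : ℕ} (hk : 1 ≤ k) : 1 ≤ Z k := by
  have h := Z_hasSum hk
  have := le_hasSum h 1 (fun i _ => by positivity)
  simpa using this

lemma Z_anti {k : ℕ} (hk : 1 ≤ k) : Z (k + 1) ≤ Z k := by
  refine hasSum_le (fun n => ?_) (Z_hasSum (by omega)) (Z_hasSum hk)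
  rcases Nat.eq_zero_or_pos n with h | h
  · subst h; simp
  · apply div_le_div_of_nonneg_left (by norm_num) (by positivity)
    apply pow_le_pow_right₀ (by exact_mod_cast h) (by omega)

lemma two_pow_sub_one {k : ℕ} (hk : 1 ≤ k) : (2:ℝ) ^ (2*k - 1) = 2 ^ (2*k) / 2 := by
  rw [eq_div_iff (two_ne_zero' ℝ), ← pow_succ]
  congr 1; omega

lemma Bnum_even_pos {k : ℕ} (hk : 1 ≤ k) : 0 < (-1 : ℝ) ^ (k + 1) * Bnum (2 * k) := by
  have h2 := Z_ge_one hk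
  have h3 : Z k = ((-1 : ℝ) ^ (k+1) * Bnum (2*k)) *
      ((2:ℝ) ^ (2*k-1) * π ^ (2*k) / ((2*k).factorial : ℝ)) := by
    rw [Z]; ring
  have h4 : (0:ℝ) < (2:ℝ) ^ (2*k-1) * π ^ (2*k) / ((2*k).factorial : ℝ) := by positivity
  nlinarith

lemma alt_hasSum {k : ℕ} (hk : 1 ≤ k) :
    HasSum (fun n : ℕ => (-1 : ℝ) ^ n * (1 / (n : ℝ) ^ (2 * k)))
      ((2 / 2 ^ (2 * k) - 1) * Z k) := by
  have hf := Z_hasSum hk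
  have hf2 : HasSum (fun n : ℕ => 1 / ((2 * n : ℕ) : ℝ) ^ (2 * k)) ((1 / 2 ^ (2*k)) * Z k) := by
    have := hf.mul_left ((1:ℝ) / 2 ^ (2*k))
    convert this using 2 with n
    · rfl
    push_cast
    rw [mul_pow]
    rcases Nat.eq_zero_or_pos n with h | h
    · subst h
      simp [zero_pow (by omega : 2*k ≠ 0)]
    · field_simp
  set F : ℕ → ℝ := fun n => if Even n then 1 / (n : ℝ) ^ (2 * k) else 0 with hF
  have hinj : Function.Injective (fun n : ℕ => 2 * n) := by
    intro a b h
    have : 2 * a = 2 * b := h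
    omega
  have hFsum : HasSum F ((1 / 2 ^ (2*k)) * Z k) := by
    rw [← Function.Injective.hasSum_iff hinj ?_]
    · convert hf2 using 1
      funext n
      simp [hF, Function.comp]
    · intro x hx
      have hne : ¬ Even x := by
        rintro ⟨c, hc⟩
        exact hx ⟨c, show 2 * c = x by omega⟩
      simp [hF, hne]
  have key : HasSum (fun n : ℕ => 2 * F n - 1 / (n : ℝ) ^ (2 * k))
      (2 * ((1 / 2 ^ (2*k)) * Z k) - Z k) := (hFsum.mul_left 2).sub hf
  have hfun : (fun n : ℕ => (-1 : ℝ) ^ n * (1 / (n : ℝ) ^ (2 * k)))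
      = fun n : ℕ => 2 * F n - 1 / (n : ℝ) ^ (2 * k) := by
    funext n
    rcases Nat.even_or_odd n with h | h
    · simp [hF, h, h.neg_one_pow]; ring
    · simp [hF, Nat.not_even_iff_odd.mpr h, h.neg_one_pow]
  rw [hfun, show (2 / 2 ^ (2*k) - 1) * Z k = 2 * ((1 / 2 ^ (2*k)) * Z k) - Z k by ring]
  exact key

lemma B_odd_half {k : ℕ} (hk : 1 ≤ k) : B (2 * k + 1) (1/2) = 0 := by
  have h := hasSum_one_div_nat_pow_mul_sin (k := k) (by omega)
    (x := 1/2) (by constructor <;> norm_num)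
  have h0 : (fun n : ℕ => 1 / (n : ℝ) ^ (2 * k + 1) * Real.sin (2 * π * n * (1/2)))
      = fun _ => (0:ℝ) := by
    funext n
    have : 2 * π * n * (1/2) = (n : ℝ) * π := by ring
    rw [this, Real.sin_nat_mul_pi, mul_zero]
  rw [h0] at h
  have := h.unique (hasSum_zero (α := ℝ) (β := ℕ))
  have hB : (Polynomial.map (algebraMap ℚ ℝ) (Polynomial.bernoulli (2*k+1))).eval (1/2 : ℝ)
      = B (2*k+1) (1/2) := by
    rw [B, Polynomial.eval_map, Polynomial.aeval_def]
  rw [hB] at this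
  have hc : ((-1 : ℝ) ^ (k + 1) * (2 * π) ^ (2 * k + 1) / 2 / ((2*k+1).factorial : ℝ)) ≠ 0 := by
    have : (0:ℝ) < π := pi_pos
    positivity
  rcases mul_eq_zero.mp this with h' | h'
  · exact absurd h' hc
  · exact h'

lemma B_even_half {k : ℕ} (hk : 1 ≤ k) :
    B (2 * k) (1/2) = (2 / 2 ^ (2 * k) - 1) * Bnum (2 * k) := by
  have h := hasSum_one_div_nat_pow_mul_cos (k := k) (by omega)
    (x := 1/2) (by constructor <;> norm_num)
  have h0 : (fun n : ℕ => 1 / (n : ℝ) ^ (2 * k) * Real.cos (2 * π * n * (1/2)))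
      = fun n : ℕ => (-1 : ℝ) ^ n * (1 / (n : ℝ) ^ (2 * k)) := by
    funext n
    have h1 : 2 * π * n * (1/2) = 0 + (n : ℝ) * π := by ring
    rw [h1, Real.cos_add_nat_mul_pi, Real.cos_zero, mul_one]
    ring
  rw [h0] at h
  have heq := h.unique (alt_hasSum hk)
  have hB : (Polynomial.map (algebraMap ℚ ℝ) (Polynomial.bernoulli (2*k))).eval (1/2 : ℝ)
      = B (2*k) (1/2) := by
    rw [B, Polynomial.eval_map, Polynomial.aeval_def]
  rw [hB] at heq
  -- heq : c * B(2k)(1/2) = (2/2^(2k)-1) * Z k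
  have hc : ((-1 : ℝ) ^ (k + 1) * (2 * π) ^ (2 * k) / 2 / ((2*k).factorial : ℝ)) ≠ 0 := by
    have : (0:ℝ) < π := pi_pos
    positivity
  have hrhs : (2 / 2 ^ (2 * k) - 1) * Z k
      = ((-1 : ℝ) ^ (k + 1) * (2 * π) ^ (2 * k) / 2 / ((2*k).factorial : ℝ))
        * ((2 / 2 ^ (2 * k) - 1) * Bnum (2 * k)) := by
    rw [Z, two_pow_sub_one hk, mul_pow]
    ring
  rw [hrhs] at heq
  exact mul_left_cancel₀ hc heq

lemma Z_one_val : Z 1 = π^2/6 :=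
  (Z_hasSum le_rfl).unique (by convert hasSum_zeta_two using 2)

lemma Z_two_val : Z 2 = π^4/90 :=
  (Z_hasSum (by norm_num)).unique (by convert hasSum_zeta_four using 2)

lemma key' (m : ℕ) :
    6 * Z (m+2) < π^2 * ((1 - 2/2^(2*m+2)) * Z (m+1)) := by
  rcases m with _ | m'
  · rw [Z_one_val, Z_two_val]
    have h4 : (0:ℝ) < π^4 := by positivity
    norm_num
    nlinarith
  · have hZa : Z (m'+1+2) ≤ Z (m'+1+1) := Z_anti (by omega)
    have hZ1 : 1 ≤ Z (m'+1+1) := Z_ge_one (by omega)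
    have hpow : (16:ℝ) ≤ 2^(2*(m'+1)+2) := by
      calc (16:ℝ) = 2^4 := by norm_num
        _ ≤ 2^(2*(m'+1)+2) := pow_le_pow_right₀ one_le_two (by omega)
    have hpow0 : (0:ℝ) < 2^(2*(m'+1)+2) := by positivity
    have hd : 2/2^(2*(m'+1)+2) ≤ (1:ℝ)/8 := by
      rw [div_le_div_iff₀ hpow0 (by norm_num)]
      linarith
    have h78 : (7/8:ℝ) ≤ 1 - 2/2^(2*(m'+1)+2) := by linarith
    have hpi : (3:ℝ) < π := pi_gt_three
    have hpi2 : (9:ℝ) < π^2 := by nlinarith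
    have hprod : (9:ℝ) * (7/8) ≤ π^2 * (1 - 2/2^(2*(m'+1)+2)) :=
      mul_le_mul hpi2.le h78 (by norm_num) (by positivity)
    nlinarith [mul_le_mul hprod le_rfl (by linarith : (0:ℝ) ≤ Z (m'+1+1))
      (by positivity : (0:ℝ) ≤ π^2 * (1 - 2/2^(2*(m'+1)+2)))]

lemma fact7 (m : ℕ) :
    24 * ((-1:ℝ)^(m+1) * Bnum (2*m+4)) <
      (2*(m:ℝ)+4) * ((2*(m:ℝ)+3) * ((1 - 2/2^(2*m+2)) * ((-1:ℝ)^(m+2) * Bnum (2*m+2)))) := by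
  have hpi : (0:ℝ) < π := pi_pos
  set x : ℝ := (-1:ℝ)^(m+1) * Bnum (2*m+4) with hx
  set y : ℝ := (-1:ℝ)^(m+2) * Bnum (2*m+2) with hy
  have hA : Z (m+2) * ((2*m+4).factorial : ℝ) = 2^(2*m+3) * π^(2*m+4) * x := by
    rw [Z, show 2*(m+2) = 2*m+4 by omega, show 2*m+4-1 = 2*m+3 by omega,
      show m+2+1 = (m+1)+2 by omega, pow_add, hx]
    have hfz : ((2*m+4).factorial : ℝ) ≠ 0 := by
      exact_mod_cast (Nat.factorial_pos _).ne'
    field_simp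
  have hB : Z (m+1) * ((2*m+2).factorial : ℝ) = 2^(2*m+1) * π^(2*m+2) * y := by
    rw [Z, show 2*(m+1) = 2*m+2 by omega, show 2*m+2-1 = 2*m+1 by omega,
      show m+1+1 = m+2 by omega, hy]
    have hfz : ((2*m+2).factorial : ℝ) ≠ 0 := by
      exact_mod_cast (Nat.factorial_pos _).ne'
    field_simp
  have hfac : ((2*m+4).factorial : ℝ) = (2*(m:ℝ)+4) * ((2*(m:ℝ)+3) * ((2*m+2).factorial : ℝ)) := by
    rw [show (2*m+4) = (2*m+3)+1 from rfl, Nat.factorial_succ,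
      show (2*m+3) = (2*m+2)+1 from rfl, Nat.factorial_succ]
    push_cast
    ring
  have hF4pos : (0:ℝ) < ((2*m+4).factorial : ℝ) := by exact_mod_cast Nat.factorial_pos _
  have hm := mul_lt_mul_of_pos_right (key' m) hF4pos
  have e1 : 6 * Z (m+2) * ((2*m+4).factorial : ℝ)
      = (2^(2*m+1) * π^(2*m+4)) * (24 * x) := by
    have h23 : (2:ℝ)^(2*m+3) = 4 * 2^(2*m+1) := by
      rw [show 2*m+3 = (2*m+1)+2 by omega, pow_add]; ring
    calc 6 * Z (m+2) * ((2*m+4).factorial : ℝ)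
        = 6 * (Z (m+2) * ((2*m+4).factorial : ℝ)) := by ring
      _ = 6 * (2^(2*m+3) * π^(2*m+4) * x) := by rw [hA]
      _ = (2^(2*m+1) * π^(2*m+4)) * (24 * x) := by rw [h23]; ring
  have e2 : π^2 * ((1 - 2/2^(2*m+2)) * Z (m+1)) * ((2*m+4).factorial : ℝ)
      = (2^(2*m+1) * π^(2*m+4)) *
        ((2*(m:ℝ)+4) * ((2*(m:ℝ)+3) * ((1 - 2/2^(2*m+2)) * y))) := by
    rw [hfac]
    have : π^2 * ((1 - 2/2^(2*m+2)) * Z (m+1)) * ((2*(m:ℝ)+4) * ((2*(m:ℝ)+3) * ((2*m+2).factorial : ℝ)))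
        = π^2 * (1 - 2/2^(2*m+2)) * (2*(m:ℝ)+4) * (2*(m:ℝ)+3) * (Z (m+1) * ((2*m+2).factorial : ℝ)) := by
      ring
    rw [this, hB]
    ring
  rw [e1, e2] at hm
  exact lt_of_mul_lt_mul_left hm (by positivity)

lemma concave_pos {f : ℝ → ℝ} {a b : ℝ} (hab : a < b)
    (hc : StrictConcaveOn ℝ (Icc a b) f) (ha : 0 ≤ f a) (hb : 0 ≤ f b)
    {t : ℝ} (h1 : a < t) (h2 : t < b) : 0 < f t := by
  have hba : 0 < b - a := by linarith
  set θ : ℝ := (b - t) / (b - a) with hθ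
  have hθpos : 0 < θ := div_pos (by linarith) hba
  have hθlt : θ < 1 := by rw [hθ, div_lt_one hba]; linarith
  have hsum : θ + (1 - θ) = 1 := by ring
  have hcomb : θ • a + (1 - θ) • b = t := by
    rw [smul_eq_mul, smul_eq_mul, hθ]
    field_simp
    ring
  have := hc.2 (left_mem_Icc.mpr hab.le) (right_mem_Icc.mpr hab.le)
    hab.ne hθpos (by linarith) hsum
  rw [hcomb] at this
  calc (0:ℝ) ≤ θ • f a + (1 - θ) • f b := by
        rw [smul_eq_mul, smul_eq_mul]
        have u1 : 0 ≤ θ * f a := mul_nonneg hθpos.le ha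
        have u2 : 0 ≤ (1 - θ) * f b := mul_nonneg (by linarith) hb
        linarith
    _ < f t := this

lemma shapeA (f f1 f2 f3 : ℝ → ℝ)
    (hf : ∀ t, HasDerivAt f (f1 t) t)
    (hf1 : ∀ t, HasDerivAt f1 (f2 t) t)
    (hf2 : ∀ t, HasDerivAt f2 (f3 t) t)
    (hmono : StrictMonoOn f3 (Icc 0 (1/2)))
    (h3cont : Continuous f3)
    (h0 : f 0 = 0) (hh : f (1/2) = 0) (h10 : f1 0 = 0)
    (h20 : 0 < f2 0) (h2h : f2 (1/2) = 0)
    (h30 : f3 0 < 0) (h3h : 0 < f3 (1/2)) :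
    ∀ t ∈ Ioo (0:ℝ) (1/2), 0 < f t := by
  have hdiff : Differentiable ℝ f := fun t => (hf t).differentiableAt
  have hdiff1 : Differentiable ℝ f1 := fun t => (hf1 t).differentiableAt
  have hdiff2 : Differentiable ℝ f2 := fun t => (hf2 t).differentiableAt
  have hcf : Continuous f := hdiff.continuous
  have hcf1 : Continuous f1 := hdiff1.continuous
  have hcf2 : Continuous f2 := hdiff2.continuous
  have hd : deriv f = f1 := funext fun t => (hf t).deriv
  have hd1 : deriv f1 = f2 := funext fun t => (hf1 t).deriv
  have hd2 : deriv f2 = f3 := funext fun t => (hf2 t).deriv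
  obtain ⟨a, ha, h3a⟩ : ∃ a ∈ Ioo (0:ℝ) (1/2), f3 a = 0 := by
    have hsub := intermediate_value_Ioo (by norm_num : (0:ℝ) ≤ 1/2) h3cont.continuousOn
    obtain ⟨a, ha, h3a⟩ := hsub (⟨h30, h3h⟩ : (0:ℝ) ∈ Ioo (f3 0) (f3 (1/2)))
    exact ⟨a, ha, h3a⟩
  obtain ⟨ha0, hah⟩ := ha
  have hamem : a ∈ Icc (0:ℝ) (1/2) := ⟨ha0.le, hah.le⟩
  -- f2 strictly decreasing on [0,a]
  have hanti2 : StrictAntiOn f2 (Icc 0 a) := by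
    apply strictAntiOn_of_deriv_neg (convex_Icc _ _) hcf2.continuousOn
    intro x hx
    rw [interior_Icc] at hx
    rw [hd2]
    have := hmono (⟨hx.1.le, hx.2.le.trans hah.le⟩ : x ∈ Icc (0:ℝ) (1/2)) hamem hx.2
    rwa [h3a] at this
  -- f2 strictly increasing on [a,1/2]
  have hmono2 : StrictMonoOn f2 (Icc a (1/2)) := by
    apply strictMonoOn_of_deriv_pos (convex_Icc _ _) hcf2.continuousOn
    intro x hx
    rw [interior_Icc] at hx
    rw [hd2]
    have := hmono hamem (⟨(ha0.trans hx.1).le, hx.2.le⟩ : x ∈ Icc (0:ℝ) (1/2)) hx.1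
    rwa [h3a] at this
  have hf2a : f2 a < 0 := by
    have := hmono2 (left_mem_Icc.mpr hah.le) (right_mem_Icc.mpr hah.le) hah
    rwa [h2h] at this
  obtain ⟨b, hb, h2b⟩ : ∃ b ∈ Ioo (0:ℝ) a, f2 b = 0 := by
    have hsub := intermediate_value_Ioo' ha0.le hcf2.continuousOn
    obtain ⟨b, hb, h2b⟩ := hsub (⟨hf2a, h20⟩ : (0:ℝ) ∈ Ioo (f2 a) (f2 0))
    exact ⟨b, hb, h2b⟩
  obtain ⟨hb0, hba⟩ := hb
  have hbh : b < 1/2 := hba.trans hah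
  -- f2 positive on [0,b)
  have h2pos : ∀ t ∈ Ico (0:ℝ) b, 0 < f2 t := by
    intro t ht
    have := hanti2 (⟨ht.1, (ht.2.trans hba).le⟩ : t ∈ Icc (0:ℝ) a)
      (⟨hb0.le, hba.le⟩ : b ∈ Icc (0:ℝ) a) ht.2
    rwa [h2b] at this
  -- f2 negative on (b,1/2)
  have h2neg : ∀ t ∈ Ioo b (1/2), f2 t < 0 := by
    intro t ht
    rcases le_or_gt t a with h | h
    · have := hanti2 (⟨hb0.le, hba.le⟩ : b ∈ Icc (0:ℝ) a) (⟨(hb0.trans ht.1).le, h⟩ : t ∈ Icc (0:ℝ) a) ht.1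
      rwa [h2b] at this
    · have := hmono2 (⟨h.le, ht.2.le⟩ : t ∈ Icc a (1/2)) (right_mem_Icc.mpr hah.le) ht.2
      rwa [h2h] at this
  -- f1 > 0 on (0,b]
  have hmono1 : StrictMonoOn f1 (Icc 0 b) := by
    apply strictMonoOn_of_deriv_pos (convex_Icc _ _) hcf1.continuousOn
    intro x hx
    rw [interior_Icc] at hx
    rw [hd1]
    exact h2pos x ⟨hx.1.le, hx.2⟩
  have h1pos : ∀ t ∈ Ioc (0:ℝ) b, 0 < f1 t := by
    intro t ht
    have := hmono1 (left_mem_Icc.mpr (hb0.le.trans (le_of_eq rfl))) (⟨ht.1.le, ht.2⟩ : t ∈ Icc (0:ℝ) b) ht.1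
    rwa [h10] at this
  -- f > 0 on (0,b]
  have hmonof : StrictMonoOn f (Icc 0 b) := by
    apply strictMonoOn_of_deriv_pos (convex_Icc _ _) hcf.continuousOn
    intro x hx
    rw [interior_Icc] at hx
    rw [hd]
    exact h1pos x ⟨hx.1, hx.2.le⟩
  have hfpos1 : ∀ t ∈ Ioc (0:ℝ) b, 0 < f t := by
    intro t ht
    have := hmonof (left_mem_Icc.mpr hb0.le) (⟨ht.1.le, ht.2⟩ : t ∈ Icc (0:ℝ) b) ht.1
    rwa [h0] at this
  -- f strictly concave on [b,1/2]
  have hconc : StrictConcaveOn ℝ (Icc b (1/2)) f := by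
    apply strictConcaveOn_of_deriv2_neg (convex_Icc _ _) hcf.continuousOn
    intro x hx
    rw [interior_Icc] at hx
    have : deriv^[2] f x = f2 x := by
      show deriv (deriv f) x = f2 x
      rw [hd, hd1]
    rw [this]
    exact h2neg x hx
  intro t ht
  rcases le_or_gt t b with h | h
  · exact hfpos1 t ⟨ht.1, h⟩
  · exact concave_pos hbh hconc (hfpos1 b ⟨hb0, le_rfl⟩).le (le_of_eq hh.symm) h ht.2

lemma shapeB (f f1 f2 f3 : ℝ → ℝ)
    (hf : ∀ t, HasDerivAt f (f1 t) t)
    (hf1 : ∀ t, HasDerivAt f1 (f2 t) t)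
    (hf2 : ∀ t, HasDerivAt f2 (f3 t) t)
    (hanti : StrictAntiOn f3 (Icc 0 (1/2)))
    (h3cont : Continuous f3)
    (h0 : f 0 = 0) (hh : f (1/2) = 0) (h1h : f1 (1/2) = 0)
    (h20 : f2 0 < 0) (h2h : f2 (1/2) = 0)
    (h30 : 0 < f3 0) (h3h : f3 (1/2) < 0) :
    ∀ t ∈ Ioo (0:ℝ) (1/2), 0 < f t := by
  have hdiff : Differentiable ℝ f := fun t => (hf t).differentiableAt
  have hdiff1 : Differentiable ℝ f1 := fun t => (hf1 t).differentiableAt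
  have hdiff2 : Differentiable ℝ f2 := fun t => (hf2 t).differentiableAt
  have hcf : Continuous f := hdiff.continuous
  have hcf1 : Continuous f1 := hdiff1.continuous
  have hcf2 : Continuous f2 := hdiff2.continuous
  have hd : deriv f = f1 := funext fun t => (hf t).deriv
  have hd1 : deriv f1 = f2 := funext fun t => (hf1 t).deriv
  have hd2 : deriv f2 = f3 := funext fun t => (hf2 t).deriv
  obtain ⟨a, ha, h3a⟩ : ∃ a ∈ Ioo (0:ℝ) (1/2), f3 a = 0 := by
    have hsub := intermediate_value_Ioo' (by norm_num : (0:ℝ) ≤ 1/2) h3cont.continuousOn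
    obtain ⟨a, ha, h3a⟩ := hsub (⟨h3h, h30⟩ : (0:ℝ) ∈ Ioo (f3 (1/2)) (f3 0))
    exact ⟨a, ha, h3a⟩
  obtain ⟨ha0, hah⟩ := ha
  have hamem : a ∈ Icc (0:ℝ) (1/2) := ⟨ha0.le, hah.le⟩
  -- f2 strictly increasing on [0,a]
  have hmono2 : StrictMonoOn f2 (Icc 0 a) := by
    apply strictMonoOn_of_deriv_pos (convex_Icc _ _) hcf2.continuousOn
    intro x hx
    rw [interior_Icc] at hx
    rw [hd2]
    have := hanti (⟨hx.1.le, hx.2.le.trans hah.le⟩ : x ∈ Icc (0:ℝ) (1/2)) hamem hx.2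
    rwa [h3a] at this
  -- f2 strictly decreasing on [a,1/2]
  have hanti2 : StrictAntiOn f2 (Icc a (1/2)) := by
    apply strictAntiOn_of_deriv_neg (convex_Icc _ _) hcf2.continuousOn
    intro x hx
    rw [interior_Icc] at hx
    rw [hd2]
    have := hanti hamem (⟨(ha0.trans hx.1).le, hx.2.le⟩ : x ∈ Icc (0:ℝ) (1/2)) hx.1
    rwa [h3a] at this
  have hf2a : 0 < f2 a := by
    have := hanti2 (left_mem_Icc.mpr hah.le) (right_mem_Icc.mpr hah.le) hah
    rwa [h2h] at this
  obtain ⟨b, hb, h2b⟩ : ∃ b ∈ Ioo (0:ℝ) a, f2 b = 0 := by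
    have hsub := intermediate_value_Ioo ha0.le hcf2.continuousOn
    obtain ⟨b, hb, h2b⟩ := hsub (⟨h20, hf2a⟩ : (0:ℝ) ∈ Ioo (f2 0) (f2 a))
    exact ⟨b, hb, h2b⟩
  obtain ⟨hb0, hba⟩ := hb
  have hbh : b < 1/2 := hba.trans hah
  -- f2 negative on [0,b)
  have h2neg : ∀ t ∈ Ico (0:ℝ) b, f2 t < 0 := by
    intro t ht
    have := hmono2 (⟨ht.1, (ht.2.trans hba).le⟩ : t ∈ Icc (0:ℝ) a)
      (⟨hb0.le, hba.le⟩ : b ∈ Icc (0:ℝ) a) ht.2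
    rwa [h2b] at this
  -- f2 positive on (b,1/2)
  have h2pos : ∀ t ∈ Ioo b (1/2), 0 < f2 t := by
    intro t ht
    rcases le_or_gt t a with h | h
    · have := hmono2 (⟨hb0.le, hba.le⟩ : b ∈ Icc (0:ℝ) a)
        (⟨(hb0.trans ht.1).le, h⟩ : t ∈ Icc (0:ℝ) a) ht.1
      rwa [h2b] at this
    · have := hanti2 (⟨h.le, ht.2.le⟩ : t ∈ Icc a (1/2)) (right_mem_Icc.mpr hah.le) ht.2
      rwa [h2h] at this
  -- f1 < 0 on [b,1/2)
  have hmono1 : StrictMonoOn f1 (Icc b (1/2)) := by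
    apply strictMonoOn_of_deriv_pos (convex_Icc _ _) hcf1.continuousOn
    intro x hx
    rw [interior_Icc] at hx
    rw [hd1]
    exact h2pos x hx
  have h1neg : ∀ t ∈ Ico b (1/2:ℝ), f1 t < 0 := by
    intro t ht
    have := hmono1 (⟨ht.1, ht.2.le⟩ : t ∈ Icc b (1/2)) (right_mem_Icc.mpr hbh.le) ht.2
    rwa [h1h] at this
  -- f strictly decreasing on [b,1/2] : f t > f (1/2) = 0
  have hantif : StrictAntiOn f (Icc b (1/2)) := by
    apply strictAntiOn_of_deriv_neg (convex_Icc _ _) hcf.continuousOn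
    intro x hx
    rw [interior_Icc] at hx
    rw [hd]
    exact h1neg x ⟨hx.1.le, hx.2⟩
  have hfpos1 : ∀ t ∈ Ico b (1/2:ℝ), 0 < f t := by
    intro t ht
    have := hantif (⟨ht.1, ht.2.le⟩ : t ∈ Icc b (1/2)) (right_mem_Icc.mpr hbh.le) ht.2
    rwa [hh] at this
  -- f strictly concave on [0,b]
  have hconc : StrictConcaveOn ℝ (Icc 0 b) f := by
    apply strictConcaveOn_of_deriv2_neg (convex_Icc _ _) hcf.continuousOn
    intro x hx
    rw [interior_Icc] at hx
    have hit : deriv^[2] f x = f2 x := by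
      show deriv (deriv f) x = f2 x
      rw [hd, hd1]
    rw [hit]
    exact h2neg x ⟨hx.1.le, hx.2⟩
  intro t ht
  rcases lt_or_ge t b with h | h
  · exact concave_pos hb0 hconc (le_of_eq h0.symm) (hfpos1 b ⟨le_rfl, hbh⟩).le ht.1 h
  · exact hfpos1 t ⟨h, ht.2⟩

lemma B_odd_pos : ∀ k : ℕ, ∀ t ∈ Ioo (0:ℝ) (1/2), 0 < (-1:ℝ)^(k+1) * B (2*k+1) t := by
  intro k
  induction k with
  | zero =>
    intro t ht
    rw [show 2*0+1 = 1 from rfl, B_one_eval]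
    simp only [pow_one]
    obtain ⟨h1, h2⟩ := ht
    nlinarith
  | succ k ih =>
    intro t ht
    obtain ⟨ht1, ht2⟩ := ht
    set σ : ℝ := (-1:ℝ)^(k+1+1) with hσ
    have hσalt : σ = -(-1:ℝ)^(k+1) := by rw [hσ, pow_succ]; ring
    -- v = σ * B (2k+3), v1 = σ * (2k+3) * B (2k+2)
    set v : ℝ → ℝ := fun u => σ * B (2*(k+1)+1) u with hv
    set v1 : ℝ → ℝ := fun u => σ * (((2*(k+1):ℕ):ℝ)+1) * B (2*(k+1)) u with hv1
    have hder : ∀ u, HasDerivAt v (v1 u) u := by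
      intro u
      have := (B_hasDerivAt (2*(k+1)) u).const_mul σ
      convert this using 1
      · rfl
      · rfl
      rw [hv1]; ring
    have hder1 : ∀ u, HasDerivAt v1 (σ * (((2*(k+1):ℕ):ℝ)+1) * (((2*k+1:ℕ):ℝ)+1) * B (2*k+1) u) u := by
      intro u
      have h2 : 2*(k+1) = (2*k+1)+1 := by omega
      rw [hv1, h2]
      convert (B_hasDerivAt (2*k+1) u).const_mul (σ * (((2*(k+1):ℕ):ℝ)+1)) using 1
      · rfl
      · rfl
      push_cast
      ring
      push_cast
      ring
    -- v1 strictly decreasing on [0,1/2]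
    have hcv1 : Continuous v1 := continuous_const.mul (B_continuous _)
    have hcv : Continuous v := continuous_const.mul (B_continuous _)
    have hanti1 : StrictAntiOn v1 (Icc 0 (1/2)) := by
      apply strictAntiOn_of_deriv_neg (convex_Icc _ _) hcv1.continuousOn
      intro x hx
      rw [interior_Icc] at hx
      rw [(hder1 x).deriv]
      have hpos := ih x hx
      have hneg' : σ * B (2*k+1) x < 0 := by
        rw [hσalt]; nlinarith
      have hc : (0:ℝ) < (((2*(k+1):ℕ):ℝ)+1) * (((2*k+1:ℕ):ℝ)+1) := by positivity
      nlinarith [mul_pos hc (neg_pos.mpr hneg')]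
    have hv10 : 0 < v1 0 := by
      rw [hv1]
      simp only []
      rw [B_zero]
      have := Bnum_even_pos (k := k+1) (by omega)
      have hσe : σ = (-1:ℝ)^(k+1+1) := hσ
      have hc : (0:ℝ) < ((2*(k+1):ℕ):ℝ)+1 := by positivity
      calc (0:ℝ) < (((2*(k+1):ℕ):ℝ)+1) * ((-1:ℝ)^(k+1+1) * Bnum (2*(k+1))) := by positivity
        _ = σ * (((2*(k+1):ℕ):ℝ)+1) * Bnum (2*(k+1)) := by rw [hσe]; ring
    have hv1h : v1 (1/2) < 0 := by
      rw [hv1]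
      simp only []
      rw [B_even_half (k := k+1) (by omega)]
      have hBp := Bnum_even_pos (k := k+1) (by omega)
      have hneg : (2 / 2^(2*(k+1)) - 1 : ℝ) < 0 := by
        have := two_pow_big (j := 2*(k+1)) (by omega)
        have h2 : (0:ℝ) < 2^(2*(k+1)) := by positivity
        rw [sub_neg, div_lt_one h2]
        exact this
      have hc : (0:ℝ) < ((2*(k+1):ℕ):ℝ)+1 := by positivity
      have hsb : σ * Bnum (2*(k+1)) > 0 := by
        have hσe : σ = (-1:ℝ)^(k+1+1) := hσ
        rw [hσe]; nlinarith
      nlinarith [mul_pos (mul_pos hc hsb) (neg_pos.mpr hneg)]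
    -- zero of v1
    obtain ⟨c, hc, hvc⟩ : ∃ c ∈ Ioo (0:ℝ) (1/2), v1 c = 0 := by
      have hsub := intermediate_value_Ioo' (by norm_num : (0:ℝ) ≤ 1/2) hcv1.continuousOn
      obtain ⟨c, hc, hvc⟩ := hsub (⟨hv1h, hv10⟩ : (0:ℝ) ∈ Ioo (v1 (1/2)) (v1 0))
      exact ⟨c, hc, hvc⟩
    obtain ⟨hc0, hch⟩ := hc
    have hv1pos : ∀ u ∈ Ico (0:ℝ) c, 0 < v1 u := by
      intro u hu
      have := hanti1 (⟨hu.1, (hu.2.trans hch).le⟩ : u ∈ Icc (0:ℝ) (1/2))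
        (⟨hc0.le, hch.le⟩ : c ∈ Icc (0:ℝ) (1/2)) hu.2
      rwa [hvc] at this
    have hv1neg : ∀ u ∈ Ioc c (1/2:ℝ), v1 u < 0 := by
      intro u hu
      have := hanti1 (⟨hc0.le, hch.le⟩ : c ∈ Icc (0:ℝ) (1/2))
        (⟨(hc0.trans hu.1).le, hu.2⟩ : u ∈ Icc (0:ℝ) (1/2)) hu.1
      rwa [hvc] at this
    have hv0 : v 0 = 0 := by
      rw [hv]; simp only []
      rw [B_zero, Bnum_odd ⟨k+1, by omega⟩ (by omega), mul_zero]
    have hvh : v (1/2) = 0 := by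
      rw [hv]; simp only []
      rw [B_odd_half (k := k+1) (by omega), mul_zero]
    have hfinal : 0 < v t := by
      rcases le_or_gt t c with h | h
      · -- v strictly increasing on [0,c]
        have hmono : StrictMonoOn v (Icc 0 c) := by
          apply strictMonoOn_of_deriv_pos (convex_Icc _ _) hcv.continuousOn
          intro x hx
          rw [interior_Icc] at hx
          rw [(hder x).deriv]
          exact hv1pos x ⟨hx.1.le, hx.2⟩
        have := hmono (left_mem_Icc.mpr hc0.le) (⟨ht1.le, h⟩ : t ∈ Icc (0:ℝ) c) ht1
        rwa [hv0] at this
      · -- v strictly decreasing on [c,1/2]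
        have hanti : StrictAntiOn v (Icc c (1/2)) := by
          apply strictAntiOn_of_deriv_neg (convex_Icc _ _) hcv.continuousOn
          intro x hx
          rw [interior_Icc] at hx
          rw [(hder x).deriv]
          exact hv1neg x ⟨hx.1, hx.2.le⟩
        have := hanti (⟨h.le, ht2.le⟩ : t ∈ Icc c (1/2)) (right_mem_Icc.mpr hch.le) ht2
        rwa [hvh] at this
    rw [hv] at hfinal
    exact hfinal

set_option maxHeartbeats 2000000 in
theorem stmt9 (n : ℕ) (hn : 2 ≤ n) (t : ℝ) (ht : 0 < t) (ht2 : t < 1/2) :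
    2 * (2*n+1 : ℝ) * |Bnum (2*n)| < |B (2*n+1) t| / (t * (1/2 - t) * (1 - t)) ∧
    |B (2*n+1) t| / (t * (1/2 - t) * (1 - t)) <
      4 * (1 - 1/(2:ℝ)^(2*n-1)) * (2*n+1 : ℝ) * |Bnum (2*n)| := by
  obtain ⟨m, rfl⟩ : ∃ m, n = m + 2 := ⟨n - 2, by omega⟩
  rw [show 2*(m+2)+1 = 2*m+5 by omega, show 2*(m+2)-1 = 2*m+3 by omega,
    show 2*(m+2) = 2*m+4 by omega]
  set s : ℝ := (-1:ℝ)^(m+1) with hs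
  have hsm3 : (-1:ℝ)^(m+2+1) = s := by
    rw [hs, show m+2+1 = (m+1)+2 by omega, pow_add]; norm_num
  have hsm2 : (-1:ℝ)^(m+2) = -s := by
    rw [hs, pow_succ]; ring
  -- positive Bernoulli magnitudes
  have hc2pos : 0 < s * Bnum (2*m+4) := by
    have := Bnum_even_pos (k := m+2) (by omega)
    rw [show 2*(m+2) = 2*m+4 by omega, hsm3] at this
    exact this
  set c2 : ℝ := s * Bnum (2*m+4) with hc2
  have hc1pos : 0 < (-1:ℝ)^(m+2) * Bnum (2*m+2) := by
    have := Bnum_even_pos (k := m+1) (by omega)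
    rw [show 2*(m+1) = 2*m+2 by omega, show m+1+1 = m+2 by omega] at this
    exact this
  set c1 : ℝ := (-1:ℝ)^(m+2) * Bnum (2*m+2) with hc1
  have hsc1 : s * Bnum (2*m+2) = -c1 := by
    rw [hc1, hsm2]; ring
  have habs : |Bnum (2*m+4)| = c2 := by
    have h1 : |s| = 1 := by rw [hs, abs_pow, abs_neg, abs_one, one_pow]
    calc |Bnum (2*m+4)| = |s| * |Bnum (2*m+4)| := by rw [h1, one_mul]
      _ = |s * Bnum (2*m+4)| := (abs_mul _ _).symm
      _ = c2 := abs_of_pos hc2pos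
  -- real coefficients
  set A5 : ℝ := 2*(m:ℝ)+5 with hA5
  set A4 : ℝ := 2*(m:ℝ)+4 with hA4
  set A3 : ℝ := 2*(m:ℝ)+3 with hA3
  have hA5pos : 0 < A5 := by rw [hA5]; positivity
  have hA4pos : 0 < A4 := by rw [hA4]; positivity
  have hA3pos : 0 < A3 := by rw [hA3]; positivity
  have hf7 : 24 * c2 < A4 * (A3 * ((1 - 2/2^(2*m+2)) * c1)) := by
    have := fact7 m
    rw [← hc1, ← hA4, ← hA3] at this
    rw [hc2, hs]
    exact this
  have htau2 : (0:ℝ) < 2/2^(2*m+2) := by positivity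
  have htau2' : 2/2^(2*m+2) < (1:ℝ) := by
    rw [div_lt_one (by positivity)]
    calc (2:ℝ) < 2^2 := by norm_num
      _ ≤ 2^(2*m+2) := pow_le_pow_right₀ one_le_two (by omega)
  have htau4 : (0:ℝ) < 2/2^(2*m+4) := by positivity
  have htau4' : 2/2^(2*m+4) < (1:ℝ) := by
    rw [div_lt_one (by positivity)]
    calc (2:ℝ) < 2^2 := by norm_num
      _ ≤ 2^(2*m+4) := pow_le_pow_right₀ one_le_two (by omega)
  -- ====== LOWER BOUND FUNCTION ======
  set K : ℝ := 2*A5*c2 with hK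
  have hKpos : 0 < K := by rw [hK]; positivity
  set f : ℝ → ℝ := fun u => s * B (2*m+5) u - K * B 3 u with hf
  set f1 : ℝ → ℝ := fun u => A5 * (s * B (2*m+4) u) - K * (3 * B 2 u) with hf1
  set f2 : ℝ → ℝ := fun u => A5*A4*(s * B (2*m+3) u) - K * (6 * B 1 u) with hf2
  set f3 : ℝ → ℝ := fun u => A5*A4*A3*(s * B (2*m+2) u) - K * 6 with hf3
  have hdf : ∀ u, HasDerivAt f (f1 u) u := by
    intro u
    have h1 := (B_hasDerivAt (2*m+4) u).const_mul s
    have h2 := (B_hasDerivAt 2 u).const_mul K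
    convert h1.sub h2 using 1
    · rfl
    · rfl
    · rfl
    rw [hf1, hA5]
    push_cast
    ring
  have hdf1 : ∀ u, HasDerivAt f1 (f2 u) u := by
    intro u
    have h1 := ((B_hasDerivAt (2*m+3) u).const_mul s).const_mul A5
    have h2 := ((B_hasDerivAt 1 u).const_mul (3:ℝ)).const_mul K
    convert h1.sub h2 using 1
    · rfl
    · rfl
    · rfl
    rw [hf2, hA4]
    push_cast
    ring
  have hdf2 : ∀ u, HasDerivAt f2 (f3 u) u := by
    intro u
    have h1 := ((B_hasDerivAt (2*m+2) u).const_mul s).const_mul (A5*A4)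
    have h2 := ((B_hasDerivAt 0 u).const_mul (6:ℝ)).const_mul K
    convert h1.sub h2 using 1
    · rfl
    · rfl
    · rfl
    rw [hf3, hA3, B_zero_eval]
    push_cast
    ring
  have hdf3 : ∀ u, HasDerivAt f3
      ((A5*A4*A3) * (s * ((((2*m+1:ℕ):ℝ)+1) * B (2*m+1) u))) u := by
    intro u
    have h1 := ((B_hasDerivAt (2*m+1) u).const_mul s).const_mul (A5*A4*A3)
    exact h1.sub_const (K*6)
  have hf3cont : Continuous f3 :=
    (continuous_const.mul (continuous_const.mul (B_continuous _))).sub continuous_const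
  have hf3mono : StrictMonoOn f3 (Icc 0 (1/2)) := by
    apply strictMonoOn_of_deriv_pos (convex_Icc _ _) hf3cont.continuousOn
    intro x hx
    rw [interior_Icc] at hx
    rw [(hdf3 x).deriv]
    have hodd := B_odd_pos m x hx
    rw [← hs] at hodd
    have hcoef : (0:ℝ) < (A5*A4*A3) * (((2*m+1:ℕ):ℝ)+1) := by positivity
    nlinarith [mul_pos hcoef hodd]
  have hB50 : B (2*m+5) 0 = 0 := by
    rw [B_zero, Bnum_odd ⟨m+2, by omega⟩ (by omega)]
  have hB5h : B (2*m+5) (1/2) = 0 := by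
    rw [show 2*m+5 = 2*(m+2)+1 by omega]
    exact B_odd_half (by omega)
  have hB30 : B (2*m+3) 0 = 0 := by
    rw [B_zero, Bnum_odd ⟨m+1, by omega⟩ (by omega)]
  have hB3h : B (2*m+3) (1/2) = 0 := by
    rw [show 2*m+3 = 2*(m+1)+1 by omega]
    exact B_odd_half (by omega)
  have hB2h : B (2*m+2) (1/2) = (2/2^(2*m+2) - 1) * Bnum (2*m+2) := by
    have := B_even_half (k := m+1) (by omega)
    rwa [show 2*(m+1) = 2*m+2 by omega] at this
  have hB4h : B (2*m+4) (1/2) = (2/2^(2*m+4) - 1) * Bnum (2*m+4) := by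
    have := B_even_half (k := m+2) (by omega)
    rwa [show 2*(m+2) = 2*m+4 by omega] at this
  have hL := shapeA f f1 f2 f3 hdf hdf1 hdf2 hf3mono hf3cont
    (by rw [hf]; simp only []; rw [hB50, B_three_eval]; norm_num)
    (by rw [hf]; simp only []; rw [hB5h, B_three_eval]; norm_num)
    (by rw [hf1]; simp only []; rw [B_zero, B_two_eval, hK, hc2]; norm_num; ring)
    (by rw [hf2]; simp only []
        rw [hB30, B_one_eval]
        have : A5*A4*(s*0) - K * (6*(0-1/2)) = 3*K := by ring
        rw [this]
        positivity)
    (by rw [hf2]; simp only []; rw [hB3h, B_one_eval]; norm_num)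
    (by rw [hf3]; simp only []
        rw [B_zero, hsc1]
        nlinarith [mul_pos (mul_pos (mul_pos hA5pos hA4pos) hA3pos) hc1pos])
    (by rw [hf3]; simp only []
        rw [hB2h]
        have hrw : s * ((2/2^(2*m+2) - 1) * Bnum (2*m+2)) = (1 - 2/2^(2*m+2)) * c1 := by
          rw [show s * ((2/2^(2*m+2) - 1) * Bnum (2*m+2))
              = (2/2^(2*m+2) - 1) * (s * Bnum (2*m+2)) by ring, hsc1]
          ring
        rw [hrw, hK]
        nlinarith [mul_pos hA5pos hc2pos, hf7, mul_pos hA5pos (mul_pos hA4pos hc1pos)])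
    t ⟨ht, ht2⟩
  -- ====== UPPER BOUND FUNCTION ======
  set γ : ℝ := 1 - 2/2^(2*m+4) with hγ
  have hγpos : 0 < γ := by rw [hγ]; linarith
  have hγle : γ ≤ 1 := by rw [hγ]; linarith
  set K' : ℝ := 4*γ*A5*c2 with hK'
  have hK'pos : 0 < K' := by rw [hK']; positivity
  set g : ℝ → ℝ := fun u => K' * B 3 u - s * B (2*m+5) u with hg
  set g1 : ℝ → ℝ := fun u => K' * (3 * B 2 u) - A5 * (s * B (2*m+4) u) with hg1
  set g2 : ℝ → ℝ := fun u => K' * (6 * B 1 u) - A5*A4*(s * B (2*m+3) u) with hg2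
  set g3 : ℝ → ℝ := fun u => K' * 6 - A5*A4*A3*(s * B (2*m+2) u) with hg3
  have hdg : ∀ u, HasDerivAt g (g1 u) u := by
    intro u
    have h1 := (B_hasDerivAt 2 u).const_mul K'
    have h2 := (B_hasDerivAt (2*m+4) u).const_mul s
    convert h1.sub h2 using 1
    · rfl
    · rfl
    · rfl
    rw [hg1, hA5]
    push_cast
    ring
  have hdg1 : ∀ u, HasDerivAt g1 (g2 u) u := by
    intro u
    have h1 := ((B_hasDerivAt 1 u).const_mul (3:ℝ)).const_mul K'
    have h2 := ((B_hasDerivAt (2*m+3) u).const_mul s).const_mul A5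
    convert h1.sub h2 using 1
    · rfl
    · rfl
    · rfl
    rw [hg2, hA4]
    push_cast
    ring
  have hdg2 : ∀ u, HasDerivAt g2 (g3 u) u := by
    intro u
    have h1 := ((B_hasDerivAt 0 u).const_mul (6:ℝ)).const_mul K'
    have h2 := ((B_hasDerivAt (2*m+2) u).const_mul s).const_mul (A5*A4)
    convert h1.sub h2 using 1
    · rfl
    · rfl
    · rfl
    rw [hg3, hA3, B_zero_eval]
    push_cast
    ring
  have hdg3 : ∀ u, HasDerivAt g3
      (-((A5*A4*A3) * (s * ((((2*m+1:ℕ):ℝ)+1) * B (2*m+1) u)))) u := by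
    intro u
    have h1 := ((B_hasDerivAt (2*m+1) u).const_mul s).const_mul (A5*A4*A3)
    have := (h1.const_sub (K'*6))
    convert this using 1
  have hg3cont : Continuous g3 :=
    continuous_const.sub (continuous_const.mul (continuous_const.mul (B_continuous _)))
  have hg3anti : StrictAntiOn g3 (Icc 0 (1/2)) := by
    apply strictAntiOn_of_deriv_neg (convex_Icc _ _) hg3cont.continuousOn
    intro x hx
    rw [interior_Icc] at hx
    rw [(hdg3 x).deriv]
    have hodd := B_odd_pos m x hx
    rw [← hs] at hodd
    have hcoef : (0:ℝ) < (A5*A4*A3) * (((2*m+1:ℕ):ℝ)+1) := by positivity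
    nlinarith [mul_pos hcoef hodd]
  have hP := shapeB g g1 g2 g3 hdg hdg1 hdg2 hg3anti hg3cont
    (by rw [hg]; simp only []; rw [hB50, B_three_eval]; norm_num)
    (by rw [hg]; simp only []; rw [hB5h, B_three_eval]; norm_num)
    (by rw [hg1]; simp only []
        rw [hB4h, B_two_eval]
        have hrw : s * ((2/2^(2*m+4) - 1) * Bnum (2*m+4)) = -(γ * c2) := by
          rw [show s * ((2/2^(2*m+4) - 1) * Bnum (2*m+4))
              = (2/2^(2*m+4) - 1) * (s * Bnum (2*m+4)) by ring, ← hc2, hγ]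
          ring
        rw [hrw, hK']
        norm_num
        ring)
    (by rw [hg2]; simp only []
        rw [hB30, B_one_eval]
        have : K' * (6*(0-1/2)) - A5*A4*(s*0) = -(3*K') := by ring
        rw [this]
        linarith)
    (by rw [hg2]; simp only []; rw [hB3h, B_one_eval]; norm_num)
    (by rw [hg3]; simp only []
        rw [B_zero, hsc1]
        nlinarith [mul_pos (mul_pos (mul_pos hA5pos hA4pos) hA3pos) hc1pos])
    (by rw [hg3]; simp only []
        rw [hB2h]
        have hrw : s * ((2/2^(2*m+2) - 1) * Bnum (2*m+2)) = (1 - 2/2^(2*m+2)) * c1 := by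
          rw [show s * ((2/2^(2*m+2) - 1) * Bnum (2*m+2))
              = (2/2^(2*m+2) - 1) * (s * Bnum (2*m+2)) by ring, hsc1]
          ring
        rw [hrw, hK']
        have hstep1 : A5 * (24 * c2) < A5 * (A4 * (A3 * ((1 - 2/2^(2*m+2)) * c1))) :=
          mul_lt_mul_of_pos_left hf7 hA5pos
        have hstep2 : 0 ≤ (1 - γ) * (A5 * c2) :=
          mul_nonneg (by linarith) (mul_pos hA5pos hc2pos).le
        clear_value γ A5 A4 A3 c1 c2
        nlinarith [hstep1, hstep2])
    t ⟨ht, ht2⟩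
  -- ====== CONCLUSION ======
  have hD : 0 < t * (1/2 - t) * (1 - t) :=
    mul_pos (mul_pos ht (by linarith)) (by linarith)
  have hB3t : B 3 t = t * (1/2 - t) * (1 - t) := by rw [B_three_eval]; ring
  rw [hf] at hL
  simp only [] at hL
  rw [hg] at hP
  simp only [] at hP
  rw [hB3t] at hL hP
  have hBpos : 0 < s * B (2*m+5) t := by
    have : 0 < K * (t * (1/2 - t) * (1 - t)) := by positivity
    linarith
  have habsB : |B (2*m+5) t| = s * B (2*m+5) t := by
    have h1 : |s| = 1 := by rw [hs, abs_pow, abs_neg, abs_one, one_pow]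
    calc |B (2*m+5) t| = |s| * |B (2*m+5) t| := by rw [h1, one_mul]
      _ = |s * B (2*m+5) t| := (abs_mul _ _).symm
      _ = s * B (2*m+5) t := abs_of_pos hBpos
  rw [habsB, habs]
  have hcast : ((m:ℝ)+2) = (((m+2:ℕ)):ℝ) := by push_cast; ring
  constructor
  · rw [lt_div_iff₀ hD]
    have hcoef : 2 * (2*((m+2:ℕ):ℝ)+1) * c2 = K := by
      rw [hK, hA5]; push_cast; ring
    calc 2 * (2*((m+2:ℕ):ℝ)+1) * c2 * (t * (1/2 - t) * (1 - t))
        = K * (t * (1/2 - t) * (1 - t)) := by rw [hcoef]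
      _ < s * B (2*m+5) t := by linarith
  · rw [div_lt_iff₀ hD]
    have hγ2 : (1 - 1/(2:ℝ)^(2*m+3)) = γ := by
      rw [hγ]
      congr 1
      rw [show 2*m+4 = (2*m+3)+1 by omega, pow_succ]
      rw [div_eq_div_iff (by positivity) (by positivity)]
      ring
    have hcoef : 4 * (1 - 1/(2:ℝ)^(2*m+3)) * (2*((m+2:ℕ):ℝ)+1) * c2 = K' := by
      rw [hγ2, hK', hA5]; push_cast; ring
    calc s * B (2*m+5) t < K' * (t * (1/2 - t) * (1 - t)) := by linarith
      _ = 4 * (1 - 1/(2:ℝ)^(2*m+3)) * (2*((m+2:ℕ):ℝ)+1) * c2 * (t * (1/2 - t) * (1 - t)) := by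
          rw [hcoef]
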